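/- Let R be a Mori ring (a commutative ring satisfying the ACC on regular divisorial ideals). Then the monoid H = R^• of regular elements is a Mori monoid, i.e., H satisfies the ACC on divisorial ideals of H. -/
import Mathlib


open scoped Pointwise

/-- For subsets `Z, X` of the total quotient ring `T`, the colon set
`(Z : X) = {a ∈ T | a X ⊆ Z}`. -/
def colonSet (T : Type*) [CommRing T] (Z X : Set T) : Set T :=
  {a : T | ∀ x ∈ X, a * x ∈ Z}

/-- The image of `R` inside its total quotient ring `T`. -/
def ringSet (R T : Type*) [CommRing R] [CommRing T] [Algebra R T] : Set T :=
  Set.range (algebraMap R T)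

/-- `X⁻¹ = (R : X)` for a subset `X ⊆ T`. -/
def invSet (R T : Type*) [CommRing R] [CommRing T] [Algebra R T] (X : Set T) : Set T :=
  colonSet T (ringSet R T) X

/-- The divisorial (v-) closure `X_v = (X⁻¹)⁻¹` of a subset `X ⊆ T`. -/
def vSet (R T : Type*) [CommRing R] [CommRing T] [Algebra R T] (X : Set T) : Set T :=
  invSet R T (invSet R T X)

/-- The set of regular elements (non-zero-divisors) of `T`. -/
def regSet (T : Type*) [CommRing T] : Set T :=
  {t : T | t ∈ nonZeroDivisors T}

/-- The colon set computed inside `Q = T^• ` : `(Z :_Q X) = {a ∈ Q | a X ⊆ Z}`. -/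
def colonQ (T : Type*) [CommRing T] (Z X : Set T) : Set T :=
  {a : T | a ∈ nonZeroDivisors T ∧ ∀ x ∈ X, a * x ∈ Z}

/-- The monoid `H = R^•` of regular elements of `R`, viewed inside `T`. -/
def HSet (R T : Type*) [CommRing R] [CommRing T] [Algebra R T] : Set T :=
  ringSet R T ∩ regSet T

/-- The v-closure of a subset of `Q = T^•` with respect to the monoid `H = R^•`. -/
def vMon (R T : Type*) [CommRing R] [CommRing T] [Algebra R T] (X : Set T) : Set T :=
  colonQ T (HSet R T) (colonQ T (HSet R T) X)

/-- `X ⊆ T` is `R`-fractional: `cX ⊆ R` for some regular `c ∈ R^•`. -/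
def isFrac (R T : Type*) [CommRing R] [CommRing T] [Algebra R T] (X : Set T) : Prop :=
  ∃ c : R, c ∈ nonZeroDivisors R ∧ ∀ x ∈ X, algebraMap R T c * x ∈ ringSet R T

/-- The complete integral closure `R̂` of `R` in `T`. -/
def hatSet (R T : Type*) [CommRing R] [CommRing T] [Algebra R T] : Set T :=
  {x : T | ∃ c : R, c ∈ nonZeroDivisors R ∧
    ∀ n : ℕ, 1 ≤ n → algebraMap R T c * x ^ n ∈ ringSet R T}

/-- The complete integral closure `Ĥ` of the monoid `H = R^•` in `q(H) = T^•`. -/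
def monHat (R T : Type*) [CommRing R] [CommRing T] [Algebra R T] : Set T :=
  {x : T | x ∈ nonZeroDivisors T ∧
    ∃ c ∈ HSet R T, ∀ n : ℕ, 1 ≤ n → c * x ^ n ∈ HSet R T}

/-- `R` is a v-Marot ring: every regular fractional divisorial ideal is
v-generated by its regular elements. -/
def isVMarot (R T : Type*) [CommRing R] [CommRing T] [Algebra R T] : Prop :=
  ∀ I : Set T, (I ∩ regSet T).Nonempty → isFrac R T I → vSet R T I = I →
    I = vSet R T (I ∩ regSet T)

lemma invSet_anti (R T : Type*) [CommRing R] [CommRing T] [Algebra R T] {X Y : Set T}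
    (h : X ⊆ Y) : invSet R T Y ⊆ invSet R T X :=
  fun a ha y hy => ha y (h hy)

lemma subset_vSet (R T : Type*) [CommRing R] [CommRing T] [Algebra R T] (X : Set T) :
    X ⊆ vSet R T X := fun x hx a ha => by
  simpa [mul_comm] using ha x hx

lemma vSet_mono (R T : Type*) [CommRing R] [CommRing T] [Algebra R T] {X Y : Set T}
    (h : X ⊆ Y) : vSet R T X ⊆ vSet R T Y :=
  invSet_anti R T (invSet_anti R T h)

lemma vSet_idem (R T : Type*) [CommRing R] [CommRing T] [Algebra R T] (X : Set T) :
    vSet R T (vSet R T X) = vSet R T X := by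
  have h1 : invSet R T (vSet R T X) = invSet R T X := by
    apply Set.Subset.antisymm
    · exact invSet_anti R T (subset_vSet R T X)
    · exact subset_vSet R T (invSet R T X)
  unfold vSet at h1 ⊢
  rw [h1]

lemma vSet_subset_ring (R T : Type*) [CommRing R] [CommRing T] [Algebra R T] {X : Set T}
    (h : X ⊆ ringSet R T) : vSet R T X ⊆ ringSet R T := by
  intro a ha
  have h1 : (1 : T) ∈ invSet R T X := by
    intro y hy
    simpa using h hy
  simpa using ha 1 h1

lemma vSet_inter_reg (R T : Type*) [CommRing R] [CommRing T] [Algebra R T] {X : Set T}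
    (h : X ⊆ HSet R T) : vSet R T X ∩ regSet T ⊆ vMon R T X := by
  rintro a ⟨ha, hareg⟩
  refine ⟨hareg, ?_⟩
  rintro x ⟨hxreg, hx⟩
  have hxinv : x ∈ invSet R T X := fun y hy => (hx y hy).1
  exact ⟨ha x hxinv, mul_mem hareg hxreg⟩

theorem stmt16 (R T : Type*) [CommRing R] [CommRing T] [Algebra R T] [IsFractionRing R T]
    (hMori : ∀ f : ℕ → Set T, (∀ n, f n ⊆ ringSet R T) → (∀ n, (f n ∩ regSet T).Nonempty) →
      (∀ n, vSet R T (f n) = f n) → (∀ n, f n ⊆ f (n + 1)) →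
      ∃ N, ∀ n, N ≤ n → f n = f N) :
    ∀ f : ℕ → Set T, (∀ n, f n ⊆ HSet R T) → (∀ n, vMon R T (f n) = f n) →
      (∀ n, f n ⊆ f (n + 1)) → ∃ N, ∀ n, N ≤ n → f n = f N := by
  intro f hH hV hchain
  -- key: f n = vSet (f n) ∩ regSet T
  have hkey : ∀ n, f n = vSet R T (f n) ∩ regSet T := by
    intro n
    apply Set.Subset.antisymm
    · intro x hx
      exact ⟨subset_vSet R T (f n) hx, (hH n hx).2⟩
    · intro x hx
      have : x ∈ vMon R T (f n) := vSet_inter_reg R T (hH n) hx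
      rw [hV n] at this
      exact this
  have hmono : ∀ m n, m ≤ n → f m ⊆ f n := by
    intro m n hmn
    induction n with
    | zero => simpa [Nat.le_zero.mp hmn] using Set.Subset.refl _
    | succ k ih =>
      rcases Nat.lt_or_ge m (k + 1) with h | h
      · exact (ih (Nat.lt_succ_iff.mp h)).trans (hchain k)
      · have : m = k + 1 := le_antisymm hmn h
        subst this; exact Set.Subset.refl _
  by_cases hno : ∀ n, f n = ∅
  · exact ⟨0, fun n _ => by rw [hno n, hno 0]⟩
  · push_neg at hno
    obtain ⟨m, hm⟩ := hno
    obtain ⟨x0, hx0⟩ := hm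
    set g : ℕ → Set T := fun n => vSet R T (f (m + n)) with hg
    have hgR : ∀ n, g n ⊆ ringSet R T := by
      intro n
      exact vSet_subset_ring R T (fun x hx => (hH (m + n) hx).1)
    have hgne : ∀ n, (g n ∩ regSet T).Nonempty := by
      intro n
      refine ⟨x0, ?_⟩
      have hx : x0 ∈ f (m + n) := hmono m (m + n) (Nat.le_add_right m n) hx0
      exact ⟨subset_vSet R T _ hx, (hH (m + n) hx).2⟩
    have hgV : ∀ n, vSet R T (g n) = g n := fun n => vSet_idem R T _
    have hgchain : ∀ n, g n ⊆ g (n + 1) := by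
      intro n
      have : m + n + 1 = m + (n + 1) := by ring
      exact vSet_mono R T (this ▸ hchain (m + n))
    obtain ⟨N, hN⟩ := hMori g hgR hgne hgV hgchain
    refine ⟨m + N, fun n hn => ?_⟩
    have e : m + (n - m) = n := by omega
    have h1 : f n = g (n - m) ∩ regSet T := by
      show f n = vSet R T (f (m + (n - m))) ∩ regSet T
      rw [e]; exact hkey n
    have h2 : f (m + N) = g N ∩ regSet T := hkey (m + N)
    rw [h1, h2, hN (n - m) (by omega)]
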